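/- Let d ≥ 1 be an integer and α > d, λ > 0, τ > 1 reals with γ := α(τ−1)/d > 1. Let ℓ : ℝ → ℝ be measurable, positive and locally bounded on [1,∞), and slowly varying at infinity. Let W be a random variable with W ≥ 1 almost surely and P(W > t) = ℓ(t)·t^{−(τ−1)} for all t ≥ 1. Then there exist constants M > 0 and u₀ ≥ 1 such that for all reals w ≥ 1 and u ≥ u₀: ∑_{y ∈ ℤ^d, y ≠ 0} E[ 1{W ≥ u}·(1 − exp(−λ·w·W·‖y‖^{−α})) ] ≤ M·w^{d/α}·ℓ(u)·u^{−(γ−1)d/α}. -/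

import Mathlib

open MeasureTheory

/-- The Euclidean norm of a point of the integer lattice `ℤ^d`. -/
noncomputable def euclNorm {d : ℕ} (y : Fin d → ℤ) : ℝ :=
  Real.sqrt (∑ i, ((y i : ℝ)) ^ 2)

/-- A function `ℓ : ℝ → ℝ` is slowly varying at infinity:
for every `c > 0`, `ℓ(ct)/ℓ(t) → 1` as `t → ∞`. -/
def SlowlyVarying (l : ℝ → ℝ) : Prop :=
  ∀ c : ℝ, 0 < c → Filter.Tendsto (fun t => l (c * t) / l t) Filter.atTop (nhds 1)

lemma euclNorm_nonneg {d : ℕ} (y : Fin d → ℤ) : 0 ≤ euclNorm y := Real.sqrt_nonneg _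

lemma one_le_euclNorm {d : ℕ} {y : Fin d → ℤ} (hy : y ≠ 0) : 1 ≤ euclNorm y := by
  obtain ⟨i, hi⟩ : ∃ i, y i ≠ 0 := by
    by_contra h; push_neg at h; exact hy (funext h)
  have h0 : (1:ℝ) ≤ |(y i : ℝ)| := by
    rw [← Int.cast_abs]
    exact_mod_cast Int.one_le_abs hi
  have h1 : (1:ℝ) ≤ ((y i : ℝ))^2 := by nlinarith [abs_nonneg ((y i : ℝ)), sq_abs ((y i:ℝ))]
  have h2 : ((y i:ℝ))^2 ≤ ∑ j, ((y j:ℝ))^2 :=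
    Finset.single_le_sum (f := fun j => ((y j:ℝ))^2) (fun j _ => sq_nonneg _) (Finset.mem_univ i)
  rw [euclNorm, show (1:ℝ) = Real.sqrt 1 by simp]
  exact Real.sqrt_le_sqrt (le_trans h1 h2)

lemma abs_le_euclNorm {d : ℕ} (y : Fin d → ℤ) (i : Fin d) : |(y i : ℝ)| ≤ euclNorm y := by
  rw [← Real.sqrt_sq_eq_abs, euclNorm]
  exact Real.sqrt_le_sqrt (Finset.single_le_sum (f := fun j => ((y j:ℝ))^2) (fun j _ => sq_nonneg _) (Finset.mem_univ i))

noncomputable def latBox (d m : ℕ) : Finset (Fin d → ℤ) :=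
  Fintype.piFinset fun _ => Finset.Icc (-(m:ℤ)) m

lemma latBox_card (d m : ℕ) : (latBox d m).card = (2*m+1)^d := by
  rw [latBox, Fintype.card_piFinset]
  simp [Int.card_Icc]
  congr 1
  omega

lemma mem_latBox {d m : ℕ} {y : Fin d → ℤ} (h : euclNorm y ≤ (m:ℝ)) : y ∈ latBox d m := by
  rw [latBox, Fintype.mem_piFinset]
  intro i
  rw [Finset.mem_Icc, ← abs_le]
  have := (abs_le_euclNorm y i).trans h
  rw [← Int.cast_abs] at this
  exact_mod_cast this

lemma tsum_box_le {d m : ℕ} (c : ENNReal) :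
    ∑' y : {y : Fin d → ℤ // y ≠ 0}, (if euclNorm y.1 ≤ (m:ℝ) then c else 0)
      ≤ (((2*m+1)^d : ℕ) : ENNReal) * c := by
  classical
  calc ∑' y : {y : Fin d → ℤ // y ≠ 0}, (if euclNorm y.1 ≤ (m:ℝ) then c else 0)
      ≤ ∑' y : Fin d → ℤ, (if euclNorm y ≤ (m:ℝ) then c else 0) :=
        ENNReal.tsum_comp_le_tsum_of_injective Subtype.val_injective _
    _ = ∑ y ∈ latBox d m, (if euclNorm y ≤ (m:ℝ) then c else 0) := by
        refine tsum_eq_sum ?_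
        intro b hb
        rw [if_neg]
        intro hle
        exact hb (mem_latBox hle)
    _ ≤ ∑ _y ∈ latBox d m, c := Finset.sum_le_sum (fun y _ => by split <;> simp)
    _ = ((latBox d m).card : ENNReal) * c := by rw [Finset.sum_const, nsmul_eq_mul]
    _ = _ := by rw [latBox_card]

lemma geo_bound (d : ℕ) (hd : 1 ≤ d) (α : ℝ) (hα : (d:ℝ) < α) :
    ∃ Cg : ℝ, 0 < Cg ∧ ∀ A : ℝ, 1 ≤ A →
      ∑' y : {y : Fin d → ℤ // y ≠ 0}, ENNReal.ofReal (min 1 (A * euclNorm y.1 ^ (-α)))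
        ≤ ENNReal.ofReal (Cg * A ^ ((d:ℝ)/α)) := by
  classical
  have hd0 : (0:ℝ) < d := by exact_mod_cast hd
  have hα0 : (0:ℝ) < α := lt_trans hd0 hα
  set s : ℝ := (2:ℝ) ^ (-α) with hs_def
  set ρ : ℝ := (2:ℝ) ^ ((d:ℝ) - α) with hρ_def
  have hs0 : 0 < s := Real.rpow_pos_of_pos (by norm_num) _
  have hρ0 : 0 < ρ := Real.rpow_pos_of_pos (by norm_num) _
  have hρ1 : ρ < 1 := Real.rpow_lt_one_of_one_lt_of_neg (by norm_num) (by linarith)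
  set c2 : ℝ := (2:ℝ)^d with hc2_def
  have hc2 : (2:ℝ) ≤ c2 := by
    calc (2:ℝ) = 2^1 := (pow_one 2).symm
    _ ≤ 2^d := pow_le_pow_right₀ (by norm_num) hd
  have hc2s : c2 * s = ρ := by
    rw [hc2_def, hs_def, hρ_def, ← Real.rpow_natCast (2:ℝ) d, ← Real.rpow_add (by norm_num)]
    ring_nf
  have h1ρ : (0:ℝ) < 1 - ρ := by linarith
  refine ⟨32^d + 8^d * (1-ρ)⁻¹, by positivity, fun A hA => ?_⟩
  have hA0 : 0 < A := lt_of_lt_of_le one_pos hA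
  -- the sequence of dominating terms
  set g : ℕ → ℝ := fun k => 8^d * c2^k * min 1 (A * s^k) with hg_def
  have hg_nonneg : ∀ k, 0 ≤ g k := by
    intro k
    have : (0:ℝ) ≤ min 1 (A * s^k) := le_min zero_le_one (by positivity)
    positivity
  have hpow_eq : ∀ k : ℕ, ((2:ℝ)^k) ^ (-α) = s^k := by
    intro k
    rw [hs_def, ← Real.rpow_natCast (2:ℝ) k, ← Real.rpow_natCast ((2:ℝ)^(-α)) k,
      ← Real.rpow_mul (by norm_num), ← Real.rpow_mul (by norm_num)]
    ring_nf
  have hgfar : ∀ k, g k ≤ 8^d * A * ρ^k := by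
    intro k
    have h1 : min 1 (A * s^k) ≤ A * s^k := min_le_right _ _
    calc g k ≤ 8^d * c2^k * (A * s^k) := by
          apply mul_le_mul_of_nonneg_left h1 (by positivity)
      _ = 8^d * A * (c2*s)^k := by rw [mul_pow]; ring
      _ = 8^d * A * ρ^k := by rw [hc2s]
  have hsum_geo : Summable (fun k : ℕ => 8^d * A * ρ^k) :=
    (summable_geometric_of_lt_one hρ0.le hρ1).mul_left _
  have hg_summable : Summable g := Summable.of_nonneg_of_le hg_nonneg hgfar hsum_geo
  -- pointwise domination
  have ptwise : ∀ y : {y : Fin d → ℤ // y ≠ 0},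
      ENNReal.ofReal (min 1 (A * euclNorm y.1 ^ (-α)))
        ≤ ∑' k : ℕ, (if euclNorm y.1 ≤ (((2^(k+1) : ℕ)):ℝ) then
            ENNReal.ofReal (min 1 (A * s^k)) else 0) := by
    intro y
    have h1y : 1 ≤ euclNorm y.1 := one_le_euclNorm y.2
    set n : ℕ := ⌊euclNorm y.1⌋₊ with hn_def
    have hn1 : 1 ≤ n := Nat.le_floor (by exact_mod_cast h1y)
    set k : ℕ := Nat.log 2 n with hk_def
    have hk1 : ((2:ℝ)^k) ≤ euclNorm y.1 := by
      have h1 : (2:ℕ)^k ≤ n := Nat.pow_log_le_self 2 (by omega)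
      have h2 : (n:ℝ) ≤ euclNorm y.1 := Nat.floor_le (by linarith)
      calc ((2:ℝ)^k) = (((2:ℕ)^k : ℕ) : ℝ) := by push_cast; ring
        _ ≤ (n:ℝ) := by exact_mod_cast h1
        _ ≤ _ := h2
    have hk2 : euclNorm y.1 ≤ (((2^(k+1) : ℕ)):ℝ) := by
      have h1 : n < 2^(k+1) := Nat.lt_pow_succ_log_self (by norm_num) n
      have h2 : euclNorm y.1 < (n:ℝ) + 1 := Nat.lt_floor_add_one _
      have h3 : (n:ℝ) + 1 ≤ ((2^(k+1) : ℕ):ℝ) := by exact_mod_cast h1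
      linarith
    have hterm : ENNReal.ofReal (min 1 (A * euclNorm y.1 ^ (-α)))
        ≤ (if euclNorm y.1 ≤ (((2^(k+1) : ℕ)):ℝ) then
            ENNReal.ofReal (min 1 (A * s^k)) else 0) := by
      rw [if_pos hk2]
      apply ENNReal.ofReal_le_ofReal
      apply min_le_min (le_refl _)
      apply mul_le_mul_of_nonneg_left _ hA0.le
      rw [← hpow_eq k]
      exact Real.rpow_le_rpow_of_nonpos (by positivity) hk1 (by linarith)
    exact le_trans hterm (ENNReal.le_tsum k)
  calc ∑' y : {y : Fin d → ℤ // y ≠ 0}, ENNReal.ofReal (min 1 (A * euclNorm y.1 ^ (-α)))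
      ≤ ∑' y : {y : Fin d → ℤ // y ≠ 0}, ∑' k : ℕ,
          (if euclNorm y.1 ≤ (((2^(k+1) : ℕ)):ℝ) then ENNReal.ofReal (min 1 (A * s^k)) else 0) :=
        ENNReal.tsum_le_tsum ptwise
    _ = ∑' k : ℕ, ∑' y : {y : Fin d → ℤ // y ≠ 0},
          (if euclNorm y.1 ≤ (((2^(k+1) : ℕ)):ℝ) then ENNReal.ofReal (min 1 (A * s^k)) else 0) :=
        ENNReal.tsum_comm
    _ ≤ ∑' k : ℕ, (((2*2^(k+1)+1)^d : ℕ) : ENNReal) * ENNReal.ofReal (min 1 (A * s^k)) :=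
        ENNReal.tsum_le_tsum (fun k => tsum_box_le _)
    _ ≤ ∑' k : ℕ, ENNReal.ofReal (g k) := by
        apply ENNReal.tsum_le_tsum
        intro k
        have hmin0 : (0:ℝ) ≤ min 1 (A * s^k) := le_min zero_le_one (by positivity)
        rw [← ENNReal.ofReal_natCast, ← ENNReal.ofReal_mul (by positivity)]
        apply ENNReal.ofReal_le_ofReal
        apply mul_le_mul_of_nonneg_right _ hmin0
        have hnat : (2*2^(k+1)+1 : ℕ) ≤ 2^(k+3) := by
          have h1 : (1:ℕ) ≤ 2^(k+1) := Nat.one_le_two_pow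
          calc (2*2^(k+1)+1 : ℕ) ≤ 2*2^(k+1)+2*2^(k+1) := by omega
            _ = 2^(k+3) := by ring
        calc (((2*2^(k+1)+1)^d : ℕ) : ℝ) ≤ (((2^(k+3))^d : ℕ) : ℝ) := by
              exact_mod_cast Nat.pow_le_pow_left hnat d
          _ = 8^d * c2^k := by rw [hc2_def]; push_cast; ring
    _ = ENNReal.ofReal (∑' k, g k) := (ENNReal.ofReal_tsum_of_nonneg hg_nonneg hg_summable).symm
    _ ≤ ENNReal.ofReal ((32^d + 8^d * (1-ρ)⁻¹) * A ^ ((d:ℝ)/α)) := by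
        apply ENNReal.ofReal_le_ofReal
        -- the real-valued estimate
        set r : ℝ := A ^ (α⁻¹) with hr_def
        have hr1 : 1 ≤ r := Real.one_le_rpow hA (by positivity)
        have hr0 : 0 < r := lt_of_lt_of_le one_pos hr1
        set K : ℕ := Nat.clog 2 ⌈r⌉₊ with hK_def
        have h2K : r ≤ (2:ℝ)^K := by
          calc r ≤ (⌈r⌉₊ : ℝ) := Nat.le_ceil r
            _ ≤ (((2:ℕ)^K : ℕ) : ℝ) := by exact_mod_cast Nat.le_pow_clog (by norm_num) _
            _ = (2:ℝ)^K := by push_cast; ring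
        have h2K' : (2:ℝ)^K ≤ 4*r := by
          by_cases hc : 1 < ⌈r⌉₊
          · have h1 : (2:ℕ)^(K-1) < ⌈r⌉₊ := Nat.pow_pred_clog_lt_self (by norm_num) hc
            have hK1 : 1 ≤ K := Nat.clog_pos (by norm_num) hc
            have h2 : (2:ℕ)^K ≤ 2 * ⌈r⌉₊ := by
              have : (2:ℕ)^K = 2 * 2^(K-1) := by
                rw [← pow_succ']
                congr 1
                omega
              omega
            have h3 : (⌈r⌉₊:ℝ) ≤ r + 1 := by
              have := Nat.ceil_lt_add_one (le_of_lt hr0)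
              linarith
            calc (2:ℝ)^K = (((2:ℕ)^K : ℕ):ℝ) := by push_cast; ring
              _ ≤ 2 * (⌈r⌉₊:ℝ) := by exact_mod_cast h2
              _ ≤ 2 * (r+1) := by linarith
              _ ≤ 4 * r := by linarith
          · push_neg at hc
            have : K = 0 := by rw [hK_def, Nat.clog_of_right_le_one hc]
            rw [this]
            simp
            linarith
        have hgeom_sum : ∀ N : ℕ, ∑ i ∈ Finset.range N, c2^i ≤ c2^N := by
          intro N
          induction N with
          | zero => simp
          | succ n ih =>
            rw [Finset.sum_range_succ, pow_succ]
            have h0 : (0:ℝ) ≤ c2^n := by positivity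
            nlinarith
        -- near part
        have hnear : ∑ i ∈ Finset.range K, g i ≤ 32^d * r^d := by
          calc ∑ i ∈ Finset.range K, g i ≤ ∑ i ∈ Finset.range K, 8^d * c2^i := by
                apply Finset.sum_le_sum
                intro i _
                rw [hg_def]
                simp only
                rw [mul_assoc]
                apply mul_le_mul_of_nonneg_left _ (by positivity : (0:ℝ) ≤ 8^d)
                exact mul_le_of_le_one_right (by positivity) (min_le_left _ _)
            _ = 8^d * ∑ i ∈ Finset.range K, c2^i := by rw [Finset.mul_sum]
            _ ≤ 8^d * c2^K := by
                apply mul_le_mul_of_nonneg_left (hgeom_sum K) (by positivity)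
            _ = 8^d * ((2:ℝ)^K)^d := by rw [hc2_def, pow_right_comm]
            _ ≤ 8^d * (4*r)^d := by
                apply mul_le_mul_of_nonneg_left _ (by positivity)
                exact pow_le_pow_left₀ (by positivity) h2K' d
            _ = 32^d * r^d := by rw [mul_pow, ← mul_assoc, ← mul_pow]; norm_num
        -- far part
        have hρK : A * ρ^K ≤ r^d := by
          have e1 : ρ^K = ((2:ℝ)^K) ^ ((d:ℝ) - α) := by
            rw [hρ_def, ← Real.rpow_natCast ((2:ℝ) ^ ((d:ℝ) - α)) K,
              ← Real.rpow_natCast (2:ℝ) K, ← Real.rpow_mul (by norm_num),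
              ← Real.rpow_mul (by norm_num)]
            ring_nf
          have e2 : ((2:ℝ)^K) ^ ((d:ℝ) - α) ≤ r ^ ((d:ℝ) - α) :=
            Real.rpow_le_rpow_of_nonpos hr0 h2K (by linarith)
          have e3 : A = r ^ α := by
            rw [hr_def, Real.rpow_inv_rpow hA0.le (ne_of_gt hα0)]
          calc A * ρ^K ≤ A * r ^ ((d:ℝ) - α) := by
                rw [e1]; exact mul_le_mul_of_nonneg_left e2 hA0.le
            _ = r ^ α * r ^ ((d:ℝ) - α) := by rw [← e3]
            _ = r ^ ((d:ℝ)) := by rw [← Real.rpow_add hr0]; ring_nf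
            _ = r ^ d := Real.rpow_natCast r d
        have hfar : ∑' i : ℕ, g (i + K) ≤ 8^d * (1-ρ)⁻¹ * r^d := by
          have hb : ∀ i : ℕ, g (i+K) ≤ (8^d * A * ρ^K) * ρ^i := by
            intro i
            calc g (i+K) ≤ 8^d * A * ρ^(i+K) := hgfar _
              _ = (8^d * A * ρ^K) * ρ^i := by rw [pow_add]; ring
          have hsum2 : Summable (fun i : ℕ => (8^d * A * ρ^K) * ρ^i) :=
            (summable_geometric_of_lt_one hρ0.le hρ1).mul_left _
          calc ∑' i : ℕ, g (i + K) ≤ ∑' i : ℕ, (8^d * A * ρ^K) * ρ^i :=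
                (hg_summable.comp_injective (add_left_injective K)).tsum_le_tsum hb hsum2
            _ = (8^d * A * ρ^K) * (1-ρ)⁻¹ := by
                rw [tsum_mul_left, tsum_geometric_of_lt_one hρ0.le hρ1]
            _ ≤ (8^d * r^d) * (1-ρ)⁻¹ := by
                apply mul_le_mul_of_nonneg_right _ (by rw [inv_nonneg]; linarith)
                rw [mul_assoc]
                exact mul_le_mul_of_nonneg_left hρK (by positivity)
            _ = 8^d * (1-ρ)⁻¹ * r^d := by ring
        have hrd : r^d = A ^ ((d:ℝ)/α) := by
          rw [hr_def, ← Real.rpow_natCast (A ^ α⁻¹) d, ← Real.rpow_mul hA0.le]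
          congr 1
          field_simp
        calc ∑' k, g k = ∑ i ∈ Finset.range K, g i + ∑' i : ℕ, g (i + K) :=
              (hg_summable.sum_add_tsum_nat_add K).symm
          _ ≤ 32^d * r^d + 8^d * (1-ρ)⁻¹ * r^d := add_le_add hnear hfar
          _ = (32^d + 8^d * (1-ρ)⁻¹) * r^d := by ring
          _ = (32^d + 8^d * (1-ρ)⁻¹) * A ^ ((d:ℝ)/α) := by rw [hrd]

set_option maxHeartbeats 1600000

/-- **(6.5) of Claim 6.2.** With `W ≥ 1` a.s., `P(W > t) = ℓ(t) t^{-(τ-1)}` for `t ≥ 1`,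
and `γ = α(τ-1)/d > 1`, there are `M > 0` and `u₀ ≥ 1` such that for all `w ≥ 1`, `u ≥ u₀`:
`∑_{y ≠ 0} E[1{W ≥ u} (1 - exp(-λ w W ‖y‖^{-α}))] ≤ M w^{d/α} ℓ(u) u^{-(γ-1)d/α}`. -/
theorem stmt5 (d : ℕ) (hd : 1 ≤ d) (α lam τ : ℝ)
    (hα : (d : ℝ) < α) (hlam : 0 < lam) (hτ : 1 < τ)
    (hγ : 1 < α * (τ - 1) / d)
    (l : ℝ → ℝ) (hlmeas : Measurable l) (hlpos : ∀ t : ℝ, 1 ≤ t → 0 < l t)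
    (hlbdd : ∀ T : ℝ, 1 ≤ T → BddAbove (l '' Set.Icc 1 T))
    (hlsv : SlowlyVarying l)
    {Ω : Type*} [MeasurableSpace Ω] (μ : Measure Ω) [IsProbabilityMeasure μ]
    (W : Ω → ℝ) (hW : Measurable W) (hW1 : ∀ᵐ ω ∂μ, 1 ≤ W ω)
    (htail : ∀ t : ℝ, 1 ≤ t → μ {ω | t < W ω} = ENNReal.ofReal (l t * t ^ (-(τ - 1)))) :
    ∃ M > (0 : ℝ), ∃ u₀ : ℝ, 1 ≤ u₀ ∧ ∀ w : ℝ, 1 ≤ w → ∀ u : ℝ, u₀ ≤ u →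
      (∑' y : {y : Fin d → ℤ // y ≠ 0},
          ∫⁻ ω, ENNReal.ofReal
            (if u ≤ W ω then 1 - Real.exp (-(lam * w * W ω * euclNorm y.1 ^ (-α)))
             else 0) ∂μ)
        ≤ ENNReal.ofReal
            (M * w ^ ((d : ℝ) / α) * l u *
              u ^ (-((α * (τ - 1) / d - 1) * d / α))) := by
  classical
  have hd0 : (0:ℝ) < d := by exact_mod_cast hd
  have hα0 : (0:ℝ) < α := lt_trans hd0 hα
  set β : ℝ := (d:ℝ)/α with hβ_def
  have hβ0 : 0 < β := by positivity
  have hβτ : β < τ - 1 := by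
    rw [hβ_def, div_lt_iff₀ hα0]
    rw [lt_div_iff₀ hd0, one_mul] at hγ
    linarith
  obtain ⟨Cg, hCg, hgeo⟩ := geo_bound d hd α hα
  set q0 : ℝ := (2:ℝ) ^ (1 - τ + β) with hq0_def
  have hq0p : 0 < q0 := Real.rpow_pos_of_pos (by norm_num) _
  have hq01 : q0 < 1 := Real.rpow_lt_one_of_one_lt_of_neg (by norm_num) (by linarith)
  set δ : ℝ := (q0⁻¹ - 1)/2 with hδ_def
  have hδ : 0 < δ := by
    have : 1 < q0⁻¹ := (one_lt_inv₀ hq0p).mpr hq01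
    rw [hδ_def]; linarith
  set q : ℝ := (1+δ) * q0 with hq_def
  have hqp : 0 < q := by positivity
  have hq1 : q < 1 := by
    have he : (1+δ) * q0 = q0 + (1 - q0)/2 := by
      rw [hδ_def]; field_simp
    rw [hq_def, he]; linarith
  have h1q : (0:ℝ) < 1 - q := by linarith
  -- slow variation consequences
  obtain ⟨u₂, hu₂1, hu₂⟩ : ∃ u₂ : ℝ, 1 ≤ u₂ ∧ ∀ t, u₂ ≤ t → l (2*t) ≤ (1+δ) * l t := by
    have h := (hlsv 2 (by norm_num)).eventually_lt_const (show (1:ℝ) < 1+δ by linarith)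
    obtain ⟨N, hN⟩ := Filter.eventually_atTop.mp h
    refine ⟨max N 1, le_max_right _ _, fun t ht => ?_⟩
    have h1t : 1 ≤ t := le_trans (le_max_right _ _) ht
    have hlt : 0 < l t := hlpos t h1t
    have h2 := hN t (le_trans (le_max_left _ _) ht)
    rw [div_lt_iff₀ hlt] at h2
    linarith
  obtain ⟨u₃, hu₃1, hu₃⟩ : ∃ u₃ : ℝ, 1 ≤ u₃ ∧ ∀ t, u₃ ≤ t → l (t/2) ≤ 2 * l t := by
    have h := (hlsv (1/2) (by norm_num)).eventually_lt_const (show (1:ℝ) < 2 by norm_num)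
    obtain ⟨N, hN⟩ := Filter.eventually_atTop.mp h
    refine ⟨max N 1, le_max_right _ _, fun t ht => ?_⟩
    have h1t : 1 ≤ t := le_trans (le_max_right _ _) ht
    have hlt : 0 < l t := hlpos t h1t
    have h2 := hN t (le_trans (le_max_left _ _) ht)
    rw [div_lt_iff₀ hlt] at h2
    have e : (1:ℝ)/2 * t = t/2 := by ring
    rw [e] at h2
    linarith
  have chain : ∀ v : ℝ, u₂ ≤ v → ∀ j : ℕ, l ((2:ℝ)^j * v) ≤ (1+δ)^j * l v := by
    intro v hv j
    induction j with
    | zero => simp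
    | succ n ih =>
      have h2n : (1:ℝ) ≤ 2^n := one_le_pow₀ (by norm_num)
      have hv0 : 0 < v := lt_of_lt_of_le (lt_of_lt_of_le one_pos hu₂1) hv
      have hvn : u₂ ≤ 2^n * v := le_trans hv (le_mul_of_one_le_left hv0.le h2n)
      have e : (2:ℝ)^(n+1) * v = 2 * ((2:ℝ)^n * v) := by ring
      calc l ((2:ℝ)^(n+1) * v) = l (2 * ((2:ℝ)^n * v)) := by rw [e]
        _ ≤ (1+δ) * l ((2:ℝ)^n * v) := hu₂ _ hvn
        _ ≤ (1+δ) * ((1+δ)^n * l v) := by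
            apply mul_le_mul_of_nonneg_left ih (by linarith)
        _ = (1+δ)^(n+1) * l v := by ring
  set C : ℝ := Cg * (2*lam)^β * (2:ℝ)^τ with hC_def
  have hCpos : 0 < C := by positivity
  refine ⟨C * (1-q)⁻¹, by positivity, max (max 2 (2/lam)) (max (2*u₂) u₃), ?_, ?_⟩
  · calc (1:ℝ) ≤ 2 := one_le_two
      _ ≤ max 2 (2/lam) := le_max_left _ _
      _ ≤ _ := le_max_left _ _
  intro w hw u hu
  have hu2 : (2:ℝ) ≤ u := le_trans (le_trans (le_max_left _ _) (le_max_left _ _)) hu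
  have hu1 : (1:ℝ) ≤ u := by linarith
  have hu0 : (0:ℝ) < u := by linarith
  have hulam : 2/lam ≤ u := le_trans (le_trans (le_max_right _ _) (le_max_left _ _)) hu
  have hlamu : 2 ≤ lam * u := by
    rw [div_le_iff₀ hlam] at hulam; linarith [mul_comm u lam]
  have huu2 : 2*u₂ ≤ u := le_trans (le_trans (le_max_left _ _) (le_max_right _ _)) hu
  have huu3 : u₃ ≤ u := le_trans (le_trans (le_max_right _ _) (le_max_right _ _)) hu
  set v : ℝ := u/2 with hv_def
  have hv1 : 1 ≤ v := by rw [hv_def]; linarith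
  have hv0 : 0 < v := by linarith
  have hvu₂ : u₂ ≤ v := by rw [hv_def]; linarith
  have hw0 : (0:ℝ) < w := by linarith
  have hlu : 0 < l u := hlpos u hu1
  have hset : ∀ j : ℕ, MeasurableSet {ω | (2:ℝ)^j * u ≤ W ω} :=
    fun j => measurableSet_le measurable_const hW
  -- Step A : pointwise dyadic decomposition of the integral
  have stepA : ∀ y : {y : Fin d → ℤ // y ≠ 0},
      (∫⁻ ω, ENNReal.ofReal
        (if u ≤ W ω then 1 - Real.exp (-(lam * w * W ω * euclNorm y.1 ^ (-α))) else 0) ∂μ)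
      ≤ ∑' j : ℕ, ENNReal.ofReal (min 1 (lam * w * ((2:ℝ)^(j+1) * u) * euclNorm y.1 ^ (-α)))
          * μ {ω | (2:ℝ)^j * u ≤ W ω} := by
    intro y
    have hry : (0:ℝ) ≤ euclNorm y.1 ^ (-α) := Real.rpow_nonneg (euclNorm_nonneg _) _
    calc (∫⁻ ω, ENNReal.ofReal
        (if u ≤ W ω then 1 - Real.exp (-(lam * w * W ω * euclNorm y.1 ^ (-α))) else 0) ∂μ)
        ≤ ∫⁻ ω, ∑' j : ℕ,
            ENNReal.ofReal (min 1 (lam * w * ((2:ℝ)^(j+1) * u) * euclNorm y.1 ^ (-α)))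
              * Set.indicator {ω | (2:ℝ)^j * u ≤ W ω} (fun _ => (1:ENNReal)) ω ∂μ := by
          apply lintegral_mono
          intro ω
          by_cases h : u ≤ W ω
          · set m0 : ℕ := ⌊W ω / u⌋₊ with hm0_def
            have hWu : 1 ≤ W ω / u := (one_le_div hu0).mpr h
            have hm01 : 1 ≤ m0 := Nat.le_floor (by exact_mod_cast hWu)
            set j : ℕ := Nat.log 2 m0 with hj_def
            have hjl : (2:ℝ)^j * u ≤ W ω := by
              have h1 : (2:ℕ)^j ≤ m0 := Nat.pow_log_le_self 2 (by omega)
              have h2 : (m0:ℝ) ≤ W ω / u := Nat.floor_le (by linarith)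
              have h3 : (2:ℝ)^j ≤ W ω / u := by
                calc (2:ℝ)^j = (((2:ℕ)^j : ℕ):ℝ) := by push_cast; ring
                  _ ≤ (m0:ℝ) := by exact_mod_cast h1
                  _ ≤ _ := h2
              calc (2:ℝ)^j * u ≤ (W ω / u) * u := mul_le_mul_of_nonneg_right h3 hu0.le
                _ = W ω := div_mul_cancel₀ _ (ne_of_gt hu0)
            have hjr : W ω ≤ (2:ℝ)^(j+1) * u := by
              have h1 : m0 < 2^(j+1) := Nat.lt_pow_succ_log_self (by norm_num) m0
              have h2 : W ω / u < (m0:ℝ) + 1 := Nat.lt_floor_add_one _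
              have h3 : (m0:ℝ)+1 ≤ (2:ℝ)^(j+1) := by
                have h4 : m0 + 1 ≤ 2^(j+1) := h1
                calc (m0:ℝ)+1 = ((m0+1 : ℕ):ℝ) := by push_cast; ring
                  _ ≤ (((2:ℕ)^(j+1):ℕ):ℝ) := by exact_mod_cast h4
                  _ = (2:ℝ)^(j+1) := by push_cast; ring
              have h4 : W ω / u ≤ (2:ℝ)^(j+1) := by linarith
              calc W ω = (W ω / u) * u := (div_mul_cancel₀ _ (ne_of_gt hu0)).symm
                _ ≤ (2:ℝ)^(j+1) * u := mul_le_mul_of_nonneg_right h4 hu0.le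
            have hexp : (if u ≤ W ω then
                  1 - Real.exp (-(lam * w * W ω * euclNorm y.1 ^ (-α))) else 0)
                ≤ min 1 (lam * w * ((2:ℝ)^(j+1) * u) * euclNorm y.1 ^ (-α)) := by
              rw [if_pos h]
              apply le_min
              · have := Real.exp_pos (-(lam * w * W ω * euclNorm y.1 ^ (-α)))
                linarith
              · have h5 := Real.add_one_le_exp (-(lam * w * W ω * euclNorm y.1 ^ (-α)))
                have h6 : lam * w * W ω * euclNorm y.1 ^ (-α)
                    ≤ lam * w * ((2:ℝ)^(j+1) * u) * euclNorm y.1 ^ (-α) := by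
                  apply mul_le_mul_of_nonneg_right _ hry
                  apply mul_le_mul_of_nonneg_left hjr (by positivity)
                linarith
            have hmem : ω ∈ {ω | (2:ℝ)^j * u ≤ W ω} := hjl
            calc ENNReal.ofReal (if u ≤ W ω then
                  1 - Real.exp (-(lam * w * W ω * euclNorm y.1 ^ (-α))) else 0)
                ≤ ENNReal.ofReal (min 1 (lam * w * ((2:ℝ)^(j+1) * u) * euclNorm y.1 ^ (-α)))
                    * Set.indicator {ω | (2:ℝ)^j * u ≤ W ω} (fun _ => (1:ENNReal)) ω := by
                  rw [Set.indicator_of_mem hmem, mul_one]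
                  exact ENNReal.ofReal_le_ofReal hexp
              _ ≤ _ := ENNReal.le_tsum j
          · simp only [if_neg h, ENNReal.ofReal_zero]
            exact zero_le
      _ = ∑' j : ℕ, ∫⁻ ω,
            ENNReal.ofReal (min 1 (lam * w * ((2:ℝ)^(j+1) * u) * euclNorm y.1 ^ (-α)))
              * Set.indicator {ω | (2:ℝ)^j * u ≤ W ω} (fun _ => (1:ENNReal)) ω ∂μ := by
          apply lintegral_tsum
          intro j
          exact (measurable_const.mul (measurable_const.indicator (hset j))).aemeasurable
      _ = ∑' j : ℕ, ENNReal.ofReal (min 1 (lam * w * ((2:ℝ)^(j+1) * u) * euclNorm y.1 ^ (-α)))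
            * μ {ω | (2:ℝ)^j * u ≤ W ω} := by
          apply tsum_congr
          intro j
          rw [lintegral_const_mul _ (measurable_const.indicator (hset j)),
            lintegral_indicator_const (hset j), one_mul]
  -- Step B : tail bound
  have stepB : ∀ j : ℕ, μ {ω | (2:ℝ)^j * u ≤ W ω}
      ≤ ENNReal.ofReal (((1+δ)^j * (2 * l u)) * ((2:ℝ)^j * v) ^ (-(τ-1))) := by
    intro j
    have h2j : (1:ℝ) ≤ (2:ℝ)^j := one_le_pow₀ (by norm_num)
    have hv2j : 1 ≤ (2:ℝ)^j * v := le_trans hv1 (le_mul_of_one_le_left hv0.le h2j)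
    have hsub : {ω | (2:ℝ)^j * u ≤ W ω} ⊆ {ω | (2:ℝ)^j * v < W ω} := by
      intro ω hω
      simp only [Set.mem_setOf_eq] at hω ⊢
      have hlt : (2:ℝ)^j * v < (2:ℝ)^j * u := by
        apply mul_lt_mul_of_pos_left _ (by positivity)
        rw [hv_def]; linarith
      linarith
    calc μ {ω | (2:ℝ)^j * u ≤ W ω} ≤ μ {ω | (2:ℝ)^j * v < W ω} := measure_mono hsub
      _ = ENNReal.ofReal (l ((2:ℝ)^j * v) * ((2:ℝ)^j * v) ^ (-(τ-1))) := htail _ hv2j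
      _ ≤ _ := by
          apply ENNReal.ofReal_le_ofReal
          apply mul_le_mul_of_nonneg_right _ (Real.rpow_nonneg (by positivity) _)
          calc l ((2:ℝ)^j * v) ≤ (1+δ)^j * l v := chain v hvu₂ j
            _ ≤ (1+δ)^j * (2 * l u) := by
                apply mul_le_mul_of_nonneg_left _ (by positivity)
                have h7 := hu₃ u huu3
                rw [← hv_def] at h7
                exact h7
  -- the per-j real identity
  have key : ∀ j : ℕ,
      Cg * (lam * w * ((2:ℝ)^(j+1) * u)) ^ β
        * (((1+δ)^j * (2 * l u)) * ((2:ℝ)^j * v) ^ (-(τ-1)))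
      = q^j * (C * (l u * (w ^ β * u ^ (1 - τ + β)))) := by
    intro j
    have hP0 : (0:ℝ) < (2:ℝ)^j := by positivity
    have hAeq : lam * w * ((2:ℝ)^(j+1) * u) = (2*lam) * ((2:ℝ)^j * (w * u)) := by
      rw [pow_succ]; ring
    have hAβ : (lam * w * ((2:ℝ)^(j+1) * u)) ^ β
        = (2*lam)^β * (((2:ℝ)^j)^β * (w^β * u^β)) := by
      rw [hAeq, Real.mul_rpow (by positivity) (by positivity),
        Real.mul_rpow (x := (2:ℝ)^j) (y := w*u) (by positivity) (by positivity),
        Real.mul_rpow (x := w) (y := u) hw0.le hu0.le]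
    have hB : ((2:ℝ)^j * v) ^ (-(τ-1))
        = ((2:ℝ)^j)^(1-τ) * (u^(1-τ) * ((2:ℝ)^(τ-1))) := by
      rw [show -(τ-1) = 1-τ by ring, hv_def,
        Real.mul_rpow (le_of_lt hP0) (by positivity),
        Real.div_rpow hu0.le (by norm_num)]
      rw [div_eq_mul_inv, ← Real.rpow_neg (by norm_num : (0:ℝ) ≤ 2),
        show -(1-τ) = τ-1 by ring]
    have hPcomb : ((2:ℝ)^j)^β * ((2:ℝ)^j)^(1-τ) = q0^j := by
      rw [← Real.rpow_add hP0, hq0_def,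
        ← Real.rpow_natCast (2:ℝ) j,
        ← Real.rpow_natCast ((2:ℝ) ^ (1 - τ + β)) j,
        ← Real.rpow_mul (by norm_num : (0:ℝ) ≤ 2),
        ← Real.rpow_mul (by norm_num : (0:ℝ) ≤ 2)]
      ring_nf
    have huc : u^(1-τ) * u^β = u^(1-τ+β) := by
      rw [← Real.rpow_add hu0]
    have h2τ : (2:ℝ) * (2:ℝ)^(τ-1) = (2:ℝ)^τ := by
      calc (2:ℝ) * (2:ℝ)^(τ-1) = (2:ℝ)^(1:ℝ) * (2:ℝ)^(τ-1) := by rw [Real.rpow_one]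
        _ = (2:ℝ)^(1+(τ-1)) := (Real.rpow_add (by norm_num) _ _).symm
        _ = (2:ℝ)^τ := by ring_nf
    have hqpow : q^j = (1+δ)^j * q0^j := by rw [hq_def, mul_pow]
    rw [hAβ, hB, hqpow, hC_def, ← hPcomb, ← huc, ← h2τ]
    ring
  -- A_j is at least 1
  have hAj1 : ∀ j : ℕ, 1 ≤ lam * w * ((2:ℝ)^(j+1) * u) := by
    intro j
    have h2j : (2:ℝ) ≤ (2:ℝ)^(j+1) := by
      calc (2:ℝ) = 2^1 := (pow_one 2).symm
        _ ≤ 2^(j+1) := pow_le_pow_right₀ (by norm_num) (by omega)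
    have h1 : (2:ℝ) ≤ lam*u*w := by nlinarith
    calc (1:ℝ) ≤ lam*u*w*2 := by nlinarith
      _ ≤ lam*u*w*2^(j+1) := mul_le_mul_of_nonneg_left h2j (by positivity)
      _ = lam*w*(2^(j+1)*u) := by ring
  -- assemble
  have hexp_eq : -((α * (τ - 1) / (d:ℝ) - 1) * (d:ℝ) / α) = 1 - τ + β := by
    rw [hβ_def]; field_simp; ring
  rw [hexp_eq]
  calc (∑' y : {y : Fin d → ℤ // y ≠ 0},
          ∫⁻ ω, ENNReal.ofReal
            (if u ≤ W ω then 1 - Real.exp (-(lam * w * W ω * euclNorm y.1 ^ (-α)))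
             else 0) ∂μ)
      ≤ ∑' y : {y : Fin d → ℤ // y ≠ 0}, ∑' j : ℕ,
          ENNReal.ofReal (min 1 (lam * w * ((2:ℝ)^(j+1) * u) * euclNorm y.1 ^ (-α)))
            * μ {ω | (2:ℝ)^j * u ≤ W ω} := ENNReal.tsum_le_tsum stepA
    _ = ∑' j : ℕ, ∑' y : {y : Fin d → ℤ // y ≠ 0},
          ENNReal.ofReal (min 1 (lam * w * ((2:ℝ)^(j+1) * u) * euclNorm y.1 ^ (-α)))
            * μ {ω | (2:ℝ)^j * u ≤ W ω} := ENNReal.tsum_comm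
    _ ≤ ∑' j : ℕ, ENNReal.ofReal (q^j * (C * (l u * (w ^ β * u ^ (1 - τ + β))))) := by
        apply ENNReal.tsum_le_tsum
        intro j
        calc (∑' y : {y : Fin d → ℤ // y ≠ 0},
              ENNReal.ofReal (min 1 (lam * w * ((2:ℝ)^(j+1) * u) * euclNorm y.1 ^ (-α)))
                * μ {ω | (2:ℝ)^j * u ≤ W ω})
            = (∑' y : {y : Fin d → ℤ // y ≠ 0},
                ENNReal.ofReal (min 1 (lam * w * ((2:ℝ)^(j+1) * u) * euclNorm y.1 ^ (-α))))
                * μ {ω | (2:ℝ)^j * u ≤ W ω} := ENNReal.tsum_mul_right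
          _ ≤ ENNReal.ofReal (Cg * (lam * w * ((2:ℝ)^(j+1) * u)) ^ ((d:ℝ)/α))
                * ENNReal.ofReal (((1+δ)^j * (2 * l u)) * ((2:ℝ)^j * v) ^ (-(τ-1))) :=
              mul_le_mul' (hgeo _ (hAj1 j)) (stepB j)
          _ = ENNReal.ofReal (Cg * (lam * w * ((2:ℝ)^(j+1) * u)) ^ β
                * (((1+δ)^j * (2 * l u)) * ((2:ℝ)^j * v) ^ (-(τ-1)))) := by
              rw [← ENNReal.ofReal_mul (by positivity)]
          _ = ENNReal.ofReal (q^j * (C * (l u * (w ^ β * u ^ (1 - τ + β))))) := by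
              rw [key j]
    _ = ENNReal.ofReal (∑' j : ℕ, q^j * (C * (l u * (w ^ β * u ^ (1 - τ + β))))) := by
        rw [ENNReal.ofReal_tsum_of_nonneg]
        · intro j
          have : 0 ≤ l u := hlu.le
          positivity
        · exact (summable_geometric_of_lt_one hqp.le hq1).mul_right _
    _ ≤ ENNReal.ofReal (C * (1-q)⁻¹ * w ^ β * l u * u ^ (1 - τ + β)) := by
        apply ENNReal.ofReal_le_ofReal
        rw [tsum_mul_right, tsum_geometric_of_lt_one hqp.le hq1]
        apply le_of_eq
        ring
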